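/- Let z₁, z₂ ∈ ℂ with |z₁| ≤ 1 and |z₂| ≤ 1, and define g(φ) = 2 − e^{−iφ} z₁ − e^{iφ} conj(z₂) for φ ∈ ℝ (so the curve g traces an ellipse centered at 2). Suppose ψ ∈ ℝ minimizes |g(φ)| over φ ∈ ℝ and set r = |g(ψ)|. Then the entire curve lies in the closed half-plane {z ∈ ℂ : Re(conj(g(ψ)) · z) ≥ r²}; that is, Re(conj(g(ψ)) · g(φ)) ≥ |g(ψ)|² for all φ ∈ ℝ. -/

import Mathlib

open Complex

set_option maxHeartbeats 1600000

open Complex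

lemma key_uv (u1 u2 v1 v2 a b : ℝ)
    (ha : a^2 = (1-u1)^2 + u2^2) (hb : b^2 = (1-v1)^2 + v2^2)
    (ha0 : 0 ≤ a) (hb0 : 0 ≤ b) (ha1 : a ≤ 1) (hb1 : b ≤ 1)
    (hC1 : u2*v1 = u1*v2)
    (hE : a*b ≤ 1 - (u1*v1 + u2*v2)) :
    (u1+v1)^2 + (u2+v2)^2 ≤ 2*(u1+v1) := by
  by_cases hn0 : v1^2 + v2^2 = 0
  · have hv1 : v1 = 0 := by nlinarith [sq_nonneg v1, sq_nonneg v2]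
    have hv2 : v2 = 0 := by nlinarith [sq_nonneg v1, sq_nonneg v2]
    subst hv1; subst hv2
    nlinarith [ha, ha1, ha0]
  · have hnpos : 0 < v1^2 + v2^2 := lt_of_le_of_ne (by positivity) (Ne.symm hn0)
    obtain ⟨s, hsn⟩ : ∃ s:ℝ, s*(v1^2+v2^2) = u1*v1+u2*v2 :=
      ⟨(u1*v1+u2*v2)/(v1^2+v2^2), by field_simp⟩
    have hu1 : u1 = s*v1 := by
      have h : u1 * (v1^2+v2^2) = (s*v1) * (v1^2+v2^2) := by
        linear_combination (-v1)*hsn + (-v2)*hC1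
      exact mul_right_cancel₀ hn0 h
    have hu2 : u2 = s*v2 := by
      have h : u2 * (v1^2+v2^2) = (s*v2) * (v1^2+v2^2) := by
        linear_combination (-v2)*hsn + v1*hC1
      exact mul_right_cancel₀ hn0 h
    have ha2' : a^2 = 1 - 2*s*v1 + s^2*(v1^2+v2^2) := by
      rw [ha]; linear_combination (u1 - 2 + s*v1) * hu1 + (u2 + s*v2) * hu2
    have hb2' : b^2 = 1 - 2*v1 + (v1^2+v2^2) := by rw [hb]; ring
    have hbn : v1^2+v2^2 ≤ 2*v1 := by nlinarith [hb2', hb0, hb1]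
    have hv1pos : 0 < v1 := by nlinarith
    have han : s^2*(v1^2+v2^2) ≤ 2*s*v1 := by nlinarith [ha2', ha0, ha1]
    have hs0 : 0 ≤ s := by
      by_contra hneg
      push_neg at hneg
      nlinarith [mul_pos (neg_pos.mpr hneg) hv1pos, sq_nonneg s]
    have hE' : a*b ≤ 1 - s*(v1^2+v2^2) := by
      calc a*b ≤ 1 - (u1*v1 + u2*v2) := hE
      _ = 1 - s*(v1^2+v2^2) := by rw [hsn]
    have h1sn : 0 ≤ 1 - s*(v1^2+v2^2) := le_trans (mul_nonneg ha0 hb0) hE'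
    have hDpos : 0 ≤ (2*v1 - (1+s)*(v1^2+v2^2))*((1+s)-2*s*v1) := by
      have h2 : (a*b)*(a*b) ≤ (1 - s*(v1^2+v2^2))*(1 - s*(v1^2+v2^2)) :=
        mul_self_le_mul_self (mul_nonneg ha0 hb0) hE'
      have h3 : (a*b)*(a*b) = (1 - 2*s*v1 + s^2*(v1^2+v2^2))*(1 - 2*v1 + (v1^2+v2^2)) := by
        calc (a*b)*(a*b) = (a^2)*(b^2) := by ring
        _ = _ := by rw [ha2', hb2']
      nlinarith [h2, h3]
    have hgoal : (1+s)^2*(v1^2+v2^2) ≤ 2*((1+s)*v1) := by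
      by_cases hc : 0 < (1+s) - 2*s*v1
      · have hf1 : 0 ≤ 2*v1 - (1+s)*(v1^2+v2^2) := by
          by_contra hltc
          push_neg at hltc
          linarith only [hDpos, mul_pos hc (neg_pos.mpr hltc)]
        linarith only [mul_nonneg (by linarith only [hs0] : (0:ℝ) ≤ 1+s) hf1]
      · push_neg at hc
        have hspos : 0 < s := by
          rcases lt_or_eq_of_le hs0 with h | h
          · exact h
          · exfalso; rw [← h] at hc; linarith only [hc, hv1pos]
        have hsn1 : s*(v1^2+v2^2) ≤ 1 := by linarith only [h1sn]
        have t1 : (1+s)*(s*(v1^2+v2^2)) ≤ (1+s)*1 :=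
          mul_le_mul_of_nonneg_left hsn1 (by linarith only [hs0])
        have t2 : 0 < s*v1 := mul_pos hspos hv1pos
        have h3 : s*((1+s)*(v1^2+v2^2)) ≤ s*(2*v1) := by linarith only [t1, hc]
        have h4 : (1+s)*(v1^2+v2^2) ≤ 2*v1 := le_of_mul_le_mul_left h3 hspos
        linarith only [mul_nonneg (by linarith only [hs0] : (0:ℝ) ≤ 1+s)
          (by linarith only [h4] : (0:ℝ) ≤ 2*v1 - (1+s)*(v1^2+v2^2))]
    linear_combination (u1 + v1 + s*v1 + v1 - 2) * hu1 + (u2 + v2 + s*v2 + v2) * hu2 + hgoal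

theorem ellipse_separating_halfplane (z₁ z₂ : ℂ)
    (hz₁ : ‖z₁‖ ≤ 1) (hz₂ : ‖z₂‖ ≤ 1)
    (g : ℝ → ℂ)
    (hg : ∀ φ : ℝ, g φ = 2 - Complex.exp (-(φ : ℂ) * Complex.I) * z₁ -
      Complex.exp ((φ : ℂ) * Complex.I) * (starRingEnd ℂ) z₂)
    (ψ : ℝ) (hψ : ∀ φ : ℝ, ‖(g ψ)‖ ≤ ‖(g φ)‖) :
    ∀ φ : ℝ, ‖(g ψ)‖ ^ 2 ≤ ((starRingEnd ℂ) (g ψ) * g φ).re := by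
  intro φ
  obtain ⟨A, hA⟩ : ∃ A, A = Complex.exp (-(ψ : ℂ) * Complex.I) * z₁ := ⟨_, rfl⟩
  obtain ⟨B, hB⟩ : ∃ B, B = Complex.exp ((ψ : ℂ) * Complex.I) * (starRingEnd ℂ) z₂ := ⟨_, rfl⟩
  have habsA : ‖A‖ ≤ 1 := by
    rw [hA, norm_mul, Complex.norm_exp]
    simp
    exact hz₁
  have habsB : ‖B‖ ≤ 1 := by
    rw [hB, norm_mul, Complex.norm_exp, Complex.norm_conj]
    simp
    exact hz₂
  have e1 : ∀ x : ℝ, Complex.exp ((x:ℂ) * Complex.I)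
      = (Real.cos x : ℂ) + (Real.sin x : ℂ) * Complex.I := by
    intro x
    rw [Complex.exp_mul_I, Complex.ofReal_cos, Complex.ofReal_sin]
  have e2 : ∀ x : ℝ, Complex.exp (-(x:ℂ) * Complex.I)
      = (Real.cos x : ℂ) - (Real.sin x : ℂ) * Complex.I := by
    intro x
    have : -(x:ℂ) * Complex.I = ((-x : ℝ) : ℂ) * Complex.I := by push_cast; ring
    rw [this, e1 (-x), Real.cos_neg, Real.sin_neg]
    push_cast
    ring
  have hgψ : g ψ = 2 - A - B := by rw [hg, hA, hB]
  have hgt : ∀ t : ℝ, g (ψ + t) = 2 - ((Real.cos t : ℂ) - (Real.sin t : ℂ) * Complex.I) * A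
      - ((Real.cos t : ℂ) + (Real.sin t : ℂ) * Complex.I) * B := by
    intro t
    rw [hg, hA, hB]
    have c1 : (((ψ + t : ℝ)) : ℂ) = (ψ:ℂ) + (t:ℂ) := by push_cast; ring
    rw [c1]
    have c2 : -((ψ:ℂ) + (t:ℂ)) * Complex.I = -(ψ:ℂ)*Complex.I + -(t:ℂ)*Complex.I := by ring
    have c3 : ((ψ:ℂ) + (t:ℂ)) * Complex.I = (ψ:ℂ)*Complex.I + (t:ℂ)*Complex.I := by ring
    rw [c2, c3, Complex.exp_add, Complex.exp_add, e2 t, e1 t]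
    ring
  have hre : ∀ t : ℝ, (g (ψ + t)).re = 2 - Real.cos t*(A.re + B.re) - Real.sin t*(A.im - B.im) := by
    intro t
    rw [hgt t]
    simp only [Complex.sub_re, Complex.sub_im, Complex.add_re, Complex.add_im, Complex.mul_re,
      Complex.mul_im, Complex.ofReal_re, Complex.ofReal_im, Complex.I_re, Complex.I_im,
      Complex.re_ofNat, Complex.im_ofNat]
    ring
  have him : ∀ t : ℝ, (g (ψ + t)).im = Real.sin t*(A.re - B.re) - Real.cos t*(A.im + B.im) := by
    intro t
    rw [hgt t]
    simp only [Complex.sub_re, Complex.sub_im, Complex.add_re, Complex.add_im, Complex.mul_re,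
      Complex.mul_im, Complex.ofReal_re, Complex.ofReal_im, Complex.I_re, Complex.I_im,
      Complex.re_ofNat, Complex.im_ofNat]
    ring
  have hS : ∀ t : ℝ, Complex.normSq (g (ψ + t)) = (2 - Real.cos t*(A.re + B.re) - Real.sin t*(A.im - B.im))^2 + (Real.sin t*(A.re - B.re) - Real.cos t*(A.im + B.im))^2 := by
    intro t
    rw [Complex.normSq_apply, hre t, him t]
    ring
  have hSψ : Complex.normSq (g ψ) = (2 - (A.re + B.re))^2 + (A.im + B.im)^2 := by
    rw [hgψ, Complex.normSq_apply]
    simp [Complex.sub_re, Complex.sub_im]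
    ring
  have hmin : ∀ t : ℝ, (2 - (A.re + B.re))^2 + (A.im + B.im)^2 ≤ (2 - Real.cos t*(A.re + B.re) - Real.sin t*(A.im - B.im))^2 + (Real.sin t*(A.re - B.re) - Real.cos t*(A.im + B.im))^2 := by
    intro t
    rw [← hSψ, ← hS t, ← Complex.sq_norm, ← Complex.sq_norm]
    exact pow_le_pow_left₀ (norm_nonneg _) (hψ (ψ + t)) 2
  -- first order condition
  have hC1 : (2 - (A.re + B.re))*(A.im - B.im) + (A.im + B.im)*(A.re - B.re) = 0 := by
    have hld : HasDerivAt (fun t : ℝ => (2 - Real.cos t*(A.re + B.re) - Real.sin t*(A.im - B.im))^2 + (Real.sin t*(A.re - B.re) - Real.cos t*(A.im + B.im))^2)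
        (2*(2 - Real.cos 0*(A.re + B.re) - Real.sin 0*(A.im - B.im))^1*(Real.sin 0*(A.re + B.re) - Real.cos 0*(A.im - B.im))
          + 2*(Real.sin 0*(A.re - B.re) - Real.cos 0*(A.im + B.im))^1*(Real.cos 0*(A.re - B.re) + Real.sin 0*(A.im + B.im))) 0 := by
      have h1 : HasDerivAt (fun t : ℝ => 2 - Real.cos t*(A.re + B.re) - Real.sin t*(A.im - B.im))
          (Real.sin 0*(A.re + B.re) - Real.cos 0*(A.im - B.im)) 0 := by
        have hc : HasDerivAt (fun t : ℝ => Real.cos t * (A.re + B.re)) (-Real.sin 0 * (A.re + B.re)) 0 :=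
          (Real.hasDerivAt_cos 0).mul_const _
        have hs : HasDerivAt (fun t : ℝ => Real.sin t * (A.im - B.im)) (Real.cos 0 * (A.im - B.im)) 0 :=
          (Real.hasDerivAt_sin 0).mul_const _
        have := (hc.const_sub 2).sub hs
        exact this.congr_deriv (by ring)
      have h2 : HasDerivAt (fun t : ℝ => Real.sin t*(A.re - B.re) - Real.cos t*(A.im + B.im))
          (Real.cos 0*(A.re - B.re) + Real.sin 0*(A.im + B.im)) 0 := by
        have hs : HasDerivAt (fun t : ℝ => Real.sin t * (A.re - B.re)) (Real.cos 0 * (A.re - B.re)) 0 :=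
          (Real.hasDerivAt_sin 0).mul_const _
        have hc : HasDerivAt (fun t : ℝ => Real.cos t * (A.im + B.im)) (-Real.sin 0 * (A.im + B.im)) 0 :=
          (Real.hasDerivAt_cos 0).mul_const _
        have := hs.sub hc
        exact this.congr_deriv (by ring)
      exact (h1.pow 2).add (h2.pow 2)
    have hlm : IsLocalMin (fun t : ℝ => (2 - Real.cos t*(A.re + B.re) - Real.sin t*(A.im - B.im))^2 + (Real.sin t*(A.re - B.re) - Real.cos t*(A.im + B.im))^2) 0 := by
      apply Filter.Eventually.of_forall
      intro t
      show (2 - Real.cos 0*(A.re + B.re) - Real.sin 0*(A.im - B.im))^2 + (Real.sin 0*(A.re - B.re) - Real.cos 0*(A.im + B.im))^2 ≤ (2 - Real.cos t*(A.re + B.re) - Real.sin t*(A.im - B.im))^2 + (Real.sin t*(A.re - B.re) - Real.cos t*(A.im + B.im))^2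
      have h0 : (2 - Real.cos 0*(A.re + B.re) - Real.sin 0*(A.im - B.im))^2 + (Real.sin 0*(A.re - B.re) - Real.cos 0*(A.im + B.im))^2 = (2 - (A.re + B.re))^2 + (A.im + B.im)^2 := by
        rw [Real.cos_zero, Real.sin_zero]; ring
      rw [h0]
      exact hmin t
    have hz := hlm.deriv_eq_zero
    have hval := hld.deriv
    rw [hz] at hval
    rw [Real.cos_zero, Real.sin_zero] at hval
    nlinarith [hval]
  -- H is nonnegative away from cos t = 1
  have hH : ∀ t : ℝ, Real.cos t ≠ 1 → 0 ≤ (1 + Real.cos t) * (((A.re - B.re)^2 + (A.im - B.im)^2) - ((A.re + B.re)^2 + (A.im + B.im)^2)) + 4*(A.re + B.re) - 2*Real.sin t*((A.re + B.re)*(A.im - B.im) - (A.im + B.im)*(A.re - B.re)) := by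
    intro t hne
    have hfac : (2 - Real.cos t*(A.re + B.re) - Real.sin t*(A.im - B.im))^2 + (Real.sin t*(A.re - B.re) - Real.cos t*(A.im + B.im))^2 - ((2 - (A.re + B.re))^2 + (A.im + B.im)^2) = (1 - Real.cos t) * ((1 + Real.cos t) * (((A.re - B.re)^2 + (A.im - B.im)^2) - ((A.re + B.re)^2 + (A.im + B.im)^2)) + 4*(A.re + B.re) - 2*Real.sin t*((A.re + B.re)*(A.im - B.im) - (A.im + B.im)*(A.re - B.re))) := by
      linear_combination (((A.re - B.re)^2 + (A.im - B.im)^2)) * (Real.sin_sq_add_cos_sq t) + (-2*Real.sin t) * hC1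
    have hpos : 0 < 1 - Real.cos t :=
      lt_of_le_of_ne (by linarith [Real.cos_le_one t]) (by intro h; apply hne; linarith)
    have hge : 0 ≤ (1 - Real.cos t) * ((1 + Real.cos t) * (((A.re - B.re)^2 + (A.im - B.im)^2) - ((A.re + B.re)^2 + (A.im + B.im)^2)) + 4*(A.re + B.re) - 2*Real.sin t*((A.re + B.re)*(A.im - B.im) - (A.im + B.im)*(A.re - B.re))) := by
      rw [← hfac]
      have := hmin t
      linarith
    by_contra hcon
    push_neg at hcon
    nlinarith [mul_pos hpos (neg_pos.mpr hcon)]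
  -- limit at 0
  have hH0 : 0 ≤ 2*(((A.re - B.re)^2 + (A.im - B.im)^2) - ((A.re + B.re)^2 + (A.im + B.im)^2)) + 4*(A.re + B.re) := by
    have hcont : ContinuousAt (fun t : ℝ => (1 + Real.cos t) * (((A.re - B.re)^2 + (A.im - B.im)^2) - ((A.re + B.re)^2 + (A.im + B.im)^2)) + 4*(A.re + B.re) - 2*Real.sin t*((A.re + B.re)*(A.im - B.im) - (A.im + B.im)*(A.re - B.re))) 0 := by fun_prop
    have htend : Filter.Tendsto (fun t : ℝ => (1 + Real.cos t) * (((A.re - B.re)^2 + (A.im - B.im)^2) - ((A.re + B.re)^2 + (A.im + B.im)^2)) + 4*(A.re + B.re) - 2*Real.sin t*((A.re + B.re)*(A.im - B.im) - (A.im + B.im)*(A.re - B.re))) (nhdsWithin 0 (Set.Ioi 0))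
        (nhds ((1 + Real.cos 0) * (((A.re - B.re)^2 + (A.im - B.im)^2) - ((A.re + B.re)^2 + (A.im + B.im)^2)) + 4*(A.re + B.re) - 2*Real.sin 0*((A.re + B.re)*(A.im - B.im) - (A.im + B.im)*(A.re - B.re)))) := hcont.continuousWithinAt.tendsto
    have hev : ∀ᶠ t in nhdsWithin (0:ℝ) (Set.Ioi 0), 0 ≤ (1 + Real.cos t) * (((A.re - B.re)^2 + (A.im - B.im)^2) - ((A.re + B.re)^2 + (A.im + B.im)^2)) + 4*(A.re + B.re) - 2*Real.sin t*((A.re + B.re)*(A.im - B.im) - (A.im + B.im)*(A.re - B.re)) := by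
      filter_upwards [Ioo_mem_nhdsGT (zero_lt_one)] with t ht
      apply hH t
      intro hct
      have : t = 0 := by
        have hπ := Real.pi_gt_three
        rw [Real.cos_eq_one_iff_of_lt_of_lt (by linarith [ht.1]) (by linarith [ht.2])] at hct
        exact hct
      exact absurd this (ne_of_gt ht.1)
    have := ge_of_tendsto htend hev
    rw [Real.cos_zero, Real.sin_zero] at this
    linarith
  have hHall : ∀ t : ℝ, 0 ≤ (1 + Real.cos t) * (((A.re - B.re)^2 + (A.im - B.im)^2) - ((A.re + B.re)^2 + (A.im + B.im)^2)) + 4*(A.re + B.re) - 2*Real.sin t*((A.re + B.re)*(A.im - B.im) - (A.im + B.im)*(A.re - B.re)) := by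
    intro t
    by_cases hct : Real.cos t = 1
    · have hst : Real.sin t = 0 := by
        have := Real.sin_sq_add_cos_sq t
        rw [hct] at this
        nlinarith [this]
      rw [hct, hst]
      linarith [hH0]
    · exact hH t hct
  -- second order condition
  have hC2 : (A*((starRingEnd ℂ) B)).re + ‖A‖ * ‖B‖ ≤ (A.re + B.re) := by
    set w : ℂ := A * ((starRingEnd ℂ) B) with hw
    have hwre : w.re = A.re*B.re + A.im*B.im := by
      rw [hw]
      simp [Complex.mul_re]
    have hwim : w.im = A.im*B.re - A.re*B.im := by
      rw [hw]
      simp [Complex.mul_im]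
      ring
    have hwabs : ‖w‖ = ‖A‖ * ‖B‖ := by
      rw [hw, norm_mul, Complex.norm_conj]
    have hwsq : ‖w‖^2 = w.re^2 + w.im^2 := by
      rw [Complex.sq_norm, Complex.normSq_apply]
      ring
    have hxid : ((A.re - B.re)^2 + (A.im - B.im)^2) - ((A.re + B.re)^2 + (A.im + B.im)^2) = -4*w.re := by rw [hwre]; ring
    have hyid : (A.re + B.re)*(A.im - B.im) - (A.im + B.im)*(A.re - B.re) = 2*w.im := by rw [hwim]; ring
    by_cases hw0 : w = 0
    · have hre0 : w.re = 0 := by rw [hw0]; simp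
      have habs0 : ‖w‖ = 0 := by rw [hw0]; simp
      have hp := hHall Real.pi
      rw [Real.cos_pi, Real.sin_pi] at hp
      rw [← hwabs, habs0, hre0]
      linarith
    · have hρ : 0 < ‖w‖ := norm_pos_iff.mpr hw0
      have hcosa : ‖w‖ * Real.cos w.arg = w.re := by
        rw [Complex.cos_arg hw0]
        field_simp
      have hsina : ‖w‖ * Real.sin w.arg = w.im := by
        rw [Complex.sin_arg]
        field_simp
      have hkey : 0 ≤ ‖w‖ * ((1 + Real.cos w.arg) * (((A.re - B.re)^2 + (A.im - B.im)^2) - ((A.re + B.re)^2 + (A.im + B.im)^2)) + 4*(A.re + B.re) - 2*Real.sin w.arg*((A.re + B.re)*(A.im - B.im) - (A.im + B.im)*(A.re - B.re))) :=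
        mul_nonneg hρ.le (hHall w.arg)
      have hkey2 : 0 ≤ (‖w‖ + w.re)*(((A.re - B.re)^2 + (A.im - B.im)^2) - ((A.re + B.re)^2 + (A.im + B.im)^2)) + 4*(A.re + B.re)*‖w‖
          - 2*w.im*((A.re + B.re)*(A.im - B.im) - (A.im + B.im)*(A.re - B.re)) := by
        have heq : ‖w‖ * ((1 + Real.cos w.arg) * (((A.re - B.re)^2 + (A.im - B.im)^2) - ((A.re + B.re)^2 + (A.im + B.im)^2)) + 4*(A.re + B.re) - 2*Real.sin w.arg*((A.re + B.re)*(A.im - B.im) - (A.im + B.im)*(A.re - B.re)))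
            = (‖w‖ + w.re)*(((A.re - B.re)^2 + (A.im - B.im)^2) - ((A.re + B.re)^2 + (A.im + B.im)^2)) + 4*(A.re + B.re)*‖w‖
              - 2*w.im*((A.re + B.re)*(A.im - B.im) - (A.im + B.im)*(A.re - B.re)) := by
          linear_combination (((A.re - B.re)^2 + (A.im - B.im)^2) - ((A.re + B.re)^2 + (A.im + B.im)^2)) * hcosa - 2*((A.re + B.re)*(A.im - B.im) - (A.im + B.im)*(A.re - B.re)) * hsina
        rw [← heq]
        exact hkey
      rw [hxid, hyid] at hkey2
      have hfin : 0 ≤ 4*‖w‖ * ((A.re + B.re) - w.re - ‖w‖) := by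
        nlinarith [hkey2, hwsq]
      rw [← hwabs]
      by_contra hcon
      push_neg at hcon
      nlinarith [mul_pos hρ (show (0:ℝ) < w.re + ‖w‖ - (A.re + B.re) by linarith)]
  -- apply the key algebraic lemma
  have habsA2 : ‖A‖^2 = A.re^2 + A.im^2 := by
    rw [Complex.sq_norm, Complex.normSq_apply]; ring
  have habsB2 : ‖B‖^2 = B.re^2 + B.im^2 := by
    rw [Complex.sq_norm, Complex.normSq_apply]; ring
  have hwre' : (A*((starRingEnd ℂ) B)).re = A.re*B.re + A.im*B.im := by
    simp [Complex.mul_re]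
  have hmain := key_uv (1 - A.re) (-A.im) (1 - B.re) (-B.im) (‖A‖) (‖B‖)
    (by rw [habsA2]; ring)
    (by rw [habsB2]; ring)
    (norm_nonneg A) (norm_nonneg B) habsA habsB
    (by linear_combination (-0.5 : ℝ) * hC1)
    (by rw [hwre'] at hC2; nlinarith [hC2])
  -- conclusion
  have hM : ((A.re + B.re)^2 + (A.im + B.im)^2) ≤ 2*(A.re + B.re) := by nlinarith [hmain]
  have hφ : g φ = g (ψ + (φ - ψ)) := by
    congr 1
    ring
  have hgre : (g ψ).re = 2 - (A.re + B.re) := by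
    rw [hgψ]
    simp only [Complex.sub_re, Complex.sub_im, Complex.add_re, Complex.add_im, Complex.mul_re,
      Complex.mul_im, Complex.ofReal_re, Complex.ofReal_im, Complex.I_re, Complex.I_im,
      Complex.re_ofNat, Complex.im_ofNat]
    ring
  have hgim : (g ψ).im = -(A.im + B.im) := by
    rw [hgψ]
    simp only [Complex.sub_re, Complex.sub_im, Complex.add_re, Complex.add_im, Complex.mul_re,
      Complex.mul_im, Complex.ofReal_re, Complex.ofReal_im, Complex.I_re, Complex.I_im,
      Complex.re_ofNat, Complex.im_ofNat]
    ring
  rw [hφ, Complex.sq_norm, hSψ]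
  have hmulre : ((starRingEnd ℂ) (g ψ) * g (ψ + (φ - ψ))).re
      = (g ψ).re * (g (ψ + (φ - ψ))).re + (g ψ).im * (g (ψ + (φ - ψ))).im := by
    simp only [Complex.mul_re, Complex.conj_re, Complex.conj_im]
    ring
  rw [hmulre, hgre, hgim, hre (φ - ψ), him (φ - ψ)]
  have hc1σ : Real.sin (φ - ψ) * ((2 - (A.re + B.re))*(A.im - B.im) + (A.im + B.im)*(A.re - B.re)) = 0 := by
    rw [hC1, mul_zero]
  have hprod : 0 ≤ (1 - Real.cos (φ - ψ)) * (2*(A.re + B.re) - ((A.re + B.re)^2 + (A.im + B.im)^2)) :=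
    mul_nonneg (by linarith [Real.cos_le_one (φ - ψ)]) (by linarith [hM])
  nlinarith [hprod, hc1σ]
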